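/- Let H be a real inner product space, let x_1,…,x_T ∈ H and λ > 0. Then there exists a permutation of the T points, again denoted x_1,…,x_T, such that for every i = 1,…,T−1 the increments of information gain are monotonically non-increasing: Δγ(λ; x_i | x_1,…,x_{i−1}) ≥ Δγ(λ; x_{i+1} | x_1,…,x_i). -/

import Mathlib

open scoped RealInnerProductSpace BigOperators

/-- Gram matrix `(K_T)_{ij} = ⟪x_i, x_j⟫` of a tuple of points. -/
noncomputable def gram {H : Type*} [NormedAddCommGroup H] [InnerProductSpace ℝ H]
    {T : ℕ} (x : Fin T → H) : Matrix (Fin T) (Fin T) ℝ :=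
  Matrix.of fun i j => ⟪x i, x j⟫

/-- Information gain `γ(λ; x_1,…,x_T) = log det (I + λ⁻¹ K_T)`. -/
noncomputable def infoGain {H : Type*} [NormedAddCommGroup H] [InnerProductSpace ℝ H]
    (lam : ℝ) {T : ℕ} (x : Fin T → H) : ℝ :=
  Real.log (1 + lam⁻¹ • gram x).det

/-- Increment of information gain `Δγ(λ; x | x_1,…,x_n)`. -/
noncomputable def incrGain {H : Type*} [NormedAddCommGroup H] [InnerProductSpace ℝ H]
    (lam : ℝ) (x : H) {n : ℕ} (xs : Fin n → H) : ℝ :=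
  infoGain lam (Fin.cons x xs) - infoGain lam xs


namespace SubAux
open Matrix

open Matrix

variable {H : Type*} [NormedAddCommGroup H] [InnerProductSpace ℝ H]

lemma gram_posSemidef {n : ℕ} (z : Fin n → H) : (gram z).PosSemidef := by
  refine Matrix.PosSemidef.of_dotProduct_mulVec_nonneg ?_ ?_
  · ext i j
    simp [_root_.gram, Matrix.IsHermitian, Matrix.conjTranspose_apply, real_inner_comm]
  · intro c
    have : (star c) ⬝ᵥ (gram z) *ᵥ c = ⟪∑ i, c i • z i, ∑ j, c j • z j⟫ := by
      rw [sum_inner]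
      simp only [inner_sum, real_inner_smul_left, real_inner_smul_right]
      simp [dotProduct, Matrix.mulVec, _root_.gram, Finset.mul_sum, mul_comm, mul_left_comm]
    rw [this]
    exact real_inner_self_nonneg

lemma smul_posSemidef {n : ℕ} {M : Matrix (Fin n) (Fin n) ℝ} (hM : M.PosSemidef)
    {c : ℝ} (hc : 0 ≤ c) : (c • M).PosSemidef := by
  refine Matrix.PosSemidef.of_dotProduct_mulVec_nonneg ?_ ?_
  · ext i j
    have := hM.1
    simp only [Matrix.conjTranspose_apply, Matrix.smul_apply, smul_eq_mul, star_trivial]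
    rw [show M j i = Mᴴ i j from rfl, this]
  · intro x
    have := hM.dotProduct_mulVec_nonneg x
    simp only [Matrix.smul_mulVec, dotProduct_smul, smul_eq_mul]
    positivity

lemma one_add_posDef {n : ℕ} {M : Matrix (Fin n) (Fin n) ℝ} (hM : M.PosSemidef) :
    (1 + M).PosDef :=
  Matrix.PosDef.add_posSemidef Matrix.PosDef.one hM

lemma infoGain_det_pos {n : ℕ} (lam : ℝ) (hlam : 0 < lam) (z : Fin n → H) :
    0 < (1 + lam⁻¹ • gram z).det :=
  (one_add_posDef (smul_posSemidef (gram_posSemidef z) (by positivity))).det_pos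


open Matrix
variable {H : Type*} [NormedAddCommGroup H] [InnerProductSpace ℝ H]

lemma infoGain_comp_equiv {n : ℕ} (lam : ℝ) (z : Fin n → H) (e : Fin n ≃ Fin n) :
    infoGain lam (z ∘ e) = infoGain lam z := by
  have hg : gram (z ∘ e) = (gram z).submatrix e e := rfl
  unfold infoGain
  rw [hg, show (1 : Matrix (Fin n) (Fin n) ℝ) + lam⁻¹ • (gram z).submatrix e e
      = ((1 + lam⁻¹ • gram z).submatrix e e) by
    ext i j
    simp [Matrix.submatrix_apply, Matrix.one_apply, e.injective.eq_iff],
    Matrix.det_submatrix_equiv_self]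

lemma incrGain_comp_equiv {n : ℕ} (lam : ℝ) (w : H) (z : Fin n → H) (e : Fin n ≃ Fin n) :
    incrGain lam w (z ∘ e) = incrGain lam w z := by
  unfold incrGain
  rw [infoGain_comp_equiv lam z e]
  congr 1
  have : Fin.cons w (z ∘ e) = (Fin.cons w z) ∘ (Equiv.Perm.decomposeFin.symm (0, e)) := by
    funext j
    induction j using Fin.cases with
    | zero => simp
    | succ i => simp [Equiv.Perm.decomposeFin_symm_apply_succ]
  rw [this, infoGain_comp_equiv]

lemma incrGain_snoc (lam : ℝ) (w a : H) {n : ℕ} (z : Fin n → H) :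
    incrGain lam w (Fin.snoc z a) = incrGain lam w (Fin.cons a z) := by
  have : Fin.snoc z a = (Fin.cons a z) ∘ (finRotate (n+1)) := by
    funext j
    induction j using Fin.lastCases with
    | last => simp
    | cast i =>
        rw [Fin.snoc_castSucc, Function.comp_apply, finRotate_succ_apply]
        have : (i.castSucc + 1) = i.succ := by
          ext; simp [Fin.val_add_one, Fin.castSucc_lt_last i, (Fin.castSucc_lt_last i).ne]
        rw [this, Fin.cons_succ]
  rw [this, incrGain_comp_equiv]

open Matrix

lemma mul_vecMulVec {N : ℕ} (B : Matrix (Fin N) (Fin N) ℝ) (u v : Fin N → ℝ) :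
    B * vecMulVec u v = vecMulVec (B *ᵥ u) v := by
  ext i j
  simp [Matrix.mul_apply, vecMulVec_apply, Matrix.mulVec, dotProduct,
    Finset.sum_mul, mul_assoc]

lemma det_one_add_smul_vecMulVec {N : ℕ} (c : ℝ) (p u : Fin N → ℝ) :
    (1 + c • vecMulVec p u).det = 1 + c * (u ⬝ᵥ p) := by
  have h1 : c • vecMulVec p u = vecMulVec (c • p) u := by
    ext i j; simp [vecMulVec_apply, mul_assoc]
  rw [h1, vecMulVec_eq (Fin 1), Matrix.det_one_add_replicateCol_mul_replicateRow]
  simp [dotProduct_smul]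

lemma dot_inv_symm {N : ℕ} {B : Matrix (Fin N) (Fin N) ℝ} (hB : Bᵀ = B) (u w : Fin N → ℝ) :
    u ⬝ᵥ B *ᵥ w = w ⬝ᵥ B *ᵥ u := by
  have : ∀ i j, B j i = B i j := fun i j => by
    conv_lhs => rw [← hB]
    rfl
  simp only [dotProduct, Matrix.mulVec, dotProduct, Finset.mul_sum]
  rw [Finset.sum_comm]
  exact Finset.sum_congr rfl fun i _ => Finset.sum_congr rfl fun j _ => by
    rw [this i j]; ring

lemma det_key {N : ℕ} {A : Matrix (Fin N) (Fin N) ℝ} (hA : A.PosDef) (c : ℝ)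
    (u w : Fin N → ℝ) :
    (A + c • vecMulVec u u + c • vecMulVec w w).det * A.det ≤
      (A + c • vecMulVec u u).det * (A + c • vecMulVec w w).det := by
  classical
  have hdet : IsUnit A.det := hA.det_pos.ne'.isUnit
  have hAinv : A * A⁻¹ = 1 := Matrix.mul_nonsing_inv A hdet
  have hexp : ∀ M : Matrix (Fin N) (Fin N) ℝ, (A + M).det = A.det * (1 + A⁻¹ * M).det := by
    intro M
    rw [← Matrix.det_mul, Matrix.mul_add, Matrix.mul_one, ← Matrix.mul_assoc, hAinv,
      Matrix.one_mul]
  -- symmetry of A⁻¹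
  have hsymm : (A⁻¹)ᵀ = A⁻¹ := by
    have := hA.1.inv
    ext i j
    have h2 := congrFun (congrFun this i) j
    simpa [Matrix.conjTranspose_apply] using h2
  -- single rank-one determinants
  have hs : ∀ v : Fin N → ℝ, (A + c • vecMulVec v v).det
      = A.det * (1 + c * (v ⬝ᵥ A⁻¹ *ᵥ v)) := by
    intro v
    rw [hexp, Matrix.mul_smul, mul_vecMulVec, det_one_add_smul_vecMulVec]
  -- double rank-one determinant
  set a := u ⬝ᵥ A⁻¹ *ᵥ u with ha
  set b := w ⬝ᵥ A⁻¹ *ᵥ w with hb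
  set s := u ⬝ᵥ A⁻¹ *ᵥ w with hsdef
  have hsymm' : w ⬝ᵥ A⁻¹ *ᵥ u = s := (dot_inv_symm hsymm w u).trans rfl
  have hd : (A + c • vecMulVec u u + c • vecMulVec w w).det
      = A.det * ((1 + c * a) * (1 + c * b) - (c * s) * (c * s)) := by
    rw [add_assoc, hexp]
    congr 1
    -- factor M * Nm
    set M : Matrix (Fin N) (Fin 2) ℝ := Matrix.of (fun i j => ![u, w] j i) with hM
    set Nm : Matrix (Fin 2) (Fin N) ℝ := Matrix.of (fun j i => c * ![u, w] j i) with hNm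
    have hfac : c • vecMulVec u u + c • vecMulVec w w = M * Nm := by
      ext i j
      simp [hM, hNm, Matrix.mul_apply, Fin.sum_univ_two, vecMulVec_apply]
      ring
    rw [hfac, ← Matrix.mul_assoc, Matrix.det_one_add_mul_comm]
    have hG : ∀ j k : Fin 2, (Nm * (A⁻¹ * M)) j k
        = c * (![u, w] j ⬝ᵥ A⁻¹ *ᵥ ![u, w] k) := by
      intro j k
      simp only [Matrix.mul_apply, hNm, hM, Matrix.of_apply, Matrix.mulVec,
        dotProduct, Finset.mul_sum]
      exact Finset.sum_congr rfl fun i _ => Finset.sum_congr rfl fun l _ => by ring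
    rw [Matrix.det_fin_two]
    simp only [Matrix.add_apply, Matrix.one_apply, hG]
    norm_num
    rw [hsymm']
  rw [hd, hs, hs]
  have hA0 : 0 < A.det := hA.det_pos
  nlinarith [sq_nonneg (c * s), sq_nonneg A.det, mul_pos hA0 hA0]

open Matrix

def mgram {N m : ℕ} (z : Fin m → (Fin N → ℝ)) : Matrix (Fin m) (Fin m) ℝ :=
  Matrix.of fun i j => z i ⬝ᵥ z j

noncomputable def einfo (lam : ℝ) {N m : ℕ} (z : Fin m → (Fin N → ℝ)) : ℝ :=
  Real.log (1 + lam⁻¹ • mgram z).det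

lemma infoGain_eq_einfo {H : Type*} [NormedAddCommGroup H] [InnerProductSpace ℝ H]
    {m N : ℕ} (lam : ℝ) (u : Fin m → H) (z : Fin m → (Fin N → ℝ))
    (h : ∀ i j, ⟪u i, u j⟫ = z i ⬝ᵥ z j) : infoGain lam u = einfo lam z := by
  have hg : gram u = mgram z := by ext i j; exact h i j
  unfold infoGain einfo
  rw [hg]

lemma vecMulVec_mulVec' {N : ℕ} (u v x : Fin N → ℝ) :
    vecMulVec u v *ᵥ x = (v ⬝ᵥ x) • u := by
  ext i
  simp [Matrix.mulVec, dotProduct, vecMulVec_apply, Finset.mul_sum, Finset.sum_mul,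
    mul_comm, mul_left_comm]

lemma vecMulVec_posSemidef {N : ℕ} (u : Fin N → ℝ) : (vecMulVec u u).PosSemidef := by
  refine Matrix.PosSemidef.of_dotProduct_mulVec_nonneg ?_ ?_
  · ext i j
    simp [Matrix.conjTranspose_apply, vecMulVec_apply, mul_comm]
  · intro x
    rw [vecMulVec_mulVec']
    simp only [star_trivial, dotProduct_smul, smul_eq_mul]
    rw [dotProduct_comm]
    exact mul_self_nonneg _

lemma sum_vecMulVec_posSemidef {N m : ℕ} (z : Fin m → (Fin N → ℝ)) :
    (∑ i, vecMulVec (z i) (z i)).PosSemidef := by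
  classical
  refine Finset.sum_induction _ _ (fun a b ha hb => ha.add hb) Matrix.PosSemidef.zero ?_
  exact fun i _ => vecMulVec_posSemidef (z i)

lemma einfo_eq_log_det {N m : ℕ} (lam : ℝ) (z : Fin m → (Fin N → ℝ)) :
    einfo lam z = Real.log (1 + lam⁻¹ • ∑ i, vecMulVec (z i) (z i)).det := by
  unfold einfo
  congr 1
  set Φ : Matrix (Fin N) (Fin m) ℝ := Matrix.of (fun k i => z i k) with hΦ
  have h1 : mgram z = Φᵀ * Φ := by
    ext i j
    simp [mgram, hΦ, Matrix.mul_apply, dotProduct]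
  have h2 : Φ * Φᵀ = ∑ i, vecMulVec (z i) (z i) := by
    ext k l
    simp [hΦ, Matrix.mul_apply, Matrix.sum_apply, vecMulVec_apply]
  rw [h1, show (1 : Matrix (Fin m) (Fin m) ℝ) + lam⁻¹ • (Φᵀ * Φ)
      = 1 + (lam⁻¹ • Φᵀ) * Φ by rw [Matrix.smul_mul],
    Matrix.det_one_add_mul_comm, Matrix.mul_smul, h2]

open scoped MatrixOrder in
lemma posSemidef_exists_mul_self {N : ℕ} {A : Matrix (Fin N) (Fin N) ℝ} (hA : A.PosSemidef) :
    ∃ B : Matrix (Fin N) (Fin N) ℝ, A = Bᴴ * B := by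
  refine ⟨CFC.sqrt A, ?_⟩
  have h1 := CFC.sqrt_mul_sqrt_self A hA.nonneg
  have h2 : (CFC.sqrt A)ᴴ = CFC.sqrt A := (CFC.sqrt_nonneg A).isSelfAdjoint
  rw [h2, h1]

section KeyLemma
open Matrix
variable {H : Type*} [NormedAddCommGroup H] [InnerProductSpace ℝ H]

lemma incrGain_cons_le {n : ℕ} (lam : ℝ) (hlam : 0 < lam) (x y : H) (xs : Fin n → H) :
    incrGain lam x (Fin.cons y xs) ≤ incrGain lam x xs := by
  classical
  set t : Fin (n+2) → H := Fin.cons x (Fin.cons y xs) with ht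
  obtain ⟨B, hB⟩ := posSemidef_exists_mul_self (gram_posSemidef t)
  set v : Fin (n+2) → (Fin (n+2) → ℝ) := fun i k => B k i with hv
  have hiv : ∀ i j, ⟪t i, t j⟫ = v i ⬝ᵥ v j := by
    intro i j
    have h1 : gram t i j = (Bᴴ * B) i j := by rw [hB]
    simpa [_root_.gram, Matrix.mul_apply, Matrix.conjTranspose_apply, dotProduct, hv] using h1
  set vxs : Fin n → (Fin (n+2) → ℝ) := fun j => v j.succ.succ with hvxs
  have hxs : ∀ j : Fin n, xs j = t j.succ.succ := fun j => by simp [ht]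
  have hcons1 : ∀ i : Fin (n+1), (Fin.cons y xs : Fin (n+1) → H) i = t i.succ := by
    intro i; induction i using Fin.cases <;> simp [ht]
  have hcons1' : ∀ i : Fin (n+1), (Fin.cons (v 1) vxs : Fin (n+1) → _) i = v i.succ := by
    intro i
    induction i using Fin.cases with
    | zero => rw [Fin.cons_zero, Fin.succ_zero_eq_one]
    | succ j => rw [Fin.cons_succ]
  have hcons0 : ∀ i : Fin (n+1), (Fin.cons x xs : Fin (n+1) → H) i = t ((Fin.cons 0 (fun j : Fin n => j.succ.succ) : Fin (n+1) → Fin (n+2)) i) := by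
    intro i
    induction i using Fin.cases with
    | zero => rw [Fin.cons_zero, Fin.cons_zero]; rfl
    | succ j => rw [Fin.cons_succ, Fin.cons_succ, hxs]
  have hcons0' : ∀ i : Fin (n+1),
      (Fin.cons (v 0) vxs : Fin (n+1) → _) i = v ((Fin.cons 0 (fun j : Fin n => j.succ.succ) : Fin (n+1) → Fin (n+2)) i) := by
    intro i; induction i using Fin.cases <;> simp [hvxs]
  have hfull : ∀ i : Fin (n+2),
      (Fin.cons (v 0) (Fin.cons (v 1) vxs) : Fin (n+2) → _) i = v i := by
    intro i
    induction i using Fin.cases with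
    | zero => rw [Fin.cons_zero]
    | succ j => rw [Fin.cons_succ]; exact hcons1' j
  -- identify the four infoGains
  have e0 : infoGain lam xs = einfo lam vxs :=
    infoGain_eq_einfo lam _ _ (fun i j => by rw [hxs, hxs]; exact hiv _ _)
  have e1 : infoGain lam (Fin.cons y xs) = einfo lam (Fin.cons (v 1) vxs) :=
    infoGain_eq_einfo lam _ _ (fun i j => by
      rw [hcons1, hcons1, hcons1', hcons1']; exact hiv _ _)
  have e2 : infoGain lam (Fin.cons x xs) = einfo lam (Fin.cons (v 0) vxs) :=
    infoGain_eq_einfo lam _ _ (fun i j => by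
      rw [hcons0, hcons0, hcons0', hcons0']; exact hiv _ _)
  have e3 : infoGain lam (Fin.cons x (Fin.cons y xs))
      = einfo lam (Fin.cons (v 0) (Fin.cons (v 1) vxs)) :=
    infoGain_eq_einfo lam _ _ (fun i j => by rw [hfull, hfull]; exact hiv _ _)
  -- matrices
  set S : Matrix (Fin (n+2)) (Fin (n+2)) ℝ := ∑ i, vecMulVec (vxs i) (vxs i) with hS
  set D : Matrix (Fin (n+2)) (Fin (n+2)) ℝ := 1 + lam⁻¹ • S with hD
  have hDpos : D.PosDef := one_add_posDef (smul_posSemidef (sum_vecMulVec_posSemidef _) (by positivity))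
  have hPpsd : (lam⁻¹ • vecMulVec (v 0) (v 0)).PosSemidef :=
    smul_posSemidef (vecMulVec_posSemidef _) (by positivity)
  have hQpsd : (lam⁻¹ • vecMulVec (v 1) (v 1)).PosSemidef :=
    smul_posSemidef (vecMulVec_posSemidef _) (by positivity)
  have m0 : einfo lam vxs = Real.log D.det := by rw [einfo_eq_log_det]
  have m2 : einfo lam (Fin.cons (v 0) vxs)
      = Real.log (D + lam⁻¹ • vecMulVec (v 0) (v 0)).det := by
    rw [einfo_eq_log_det]
    congr 2
    rw [Fin.sum_univ_succ]
    simp only [Fin.cons_zero, Fin.cons_succ]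
    rw [smul_add, hD]
    abel
  have m1 : einfo lam (Fin.cons (v 1) vxs)
      = Real.log (D + lam⁻¹ • vecMulVec (v 1) (v 1)).det := by
    rw [einfo_eq_log_det]
    congr 2
    rw [Fin.sum_univ_succ]
    simp only [Fin.cons_zero, Fin.cons_succ]
    rw [smul_add, hD]
    abel
  have m3 : einfo lam (Fin.cons (v 0) (Fin.cons (v 1) vxs))
      = Real.log ((D + lam⁻¹ • vecMulVec (v 0) (v 0)) + lam⁻¹ • vecMulVec (v 1) (v 1)).det := by
    rw [einfo_eq_log_det]
    congr 2
    rw [Fin.sum_univ_succ, Fin.sum_univ_succ]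
    simp only [Fin.cons_zero, Fin.cons_succ]
    rw [smul_add, smul_add, hD]
    abel
  -- determinant positivity
  have d0 : 0 < D.det := hDpos.det_pos
  have dP : 0 < (D + lam⁻¹ • vecMulVec (v 0) (v 0)).det := (hDpos.add_posSemidef hPpsd).det_pos
  have dQ : 0 < (D + lam⁻¹ • vecMulVec (v 1) (v 1)).det := (hDpos.add_posSemidef hQpsd).det_pos
  have dPQ : 0 < ((D + lam⁻¹ • vecMulVec (v 0) (v 0)) + lam⁻¹ • vecMulVec (v 1) (v 1)).det :=
    ((hDpos.add_posSemidef hPpsd).add_posSemidef hQpsd).det_pos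
  have key := det_key hDpos lam⁻¹ (v 0) (v 1)
  have hlog := Real.log_le_log (mul_pos dPQ d0) key
  rw [Real.log_mul dPQ.ne' d0.ne', Real.log_mul dP.ne' dQ.ne'] at hlog
  unfold incrGain
  rw [e0, e1, e2, e3, m0, m1, m2, m3]
  linarith
end KeyLemma

section Greedy
open Matrix
variable {H : Type*} [NormedAddCommGroup H] [InnerProductSpace ℝ H]

noncomputable def pick {T : ℕ} [NeZero T] (lam : ℝ) (x : Fin T → H) {n : ℕ}
    (g : Fin n → Fin T) : Fin T :=
  if h : (Finset.univ \ Finset.image g Finset.univ).Nonempty then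
    (Finset.exists_max_image _ (fun a => incrGain lam (x a) (x ∘ g)) h).choose
  else Classical.arbitrary (Fin T)

lemma pick_spec {T : ℕ} [NeZero T] (lam : ℝ) (x : Fin T → H) {n : ℕ} (g : Fin n → Fin T)
    (h : (Finset.univ \ Finset.image g Finset.univ).Nonempty) :
    pick lam x g ∈ Finset.univ \ Finset.image g Finset.univ ∧
      ∀ a ∈ Finset.univ \ Finset.image g Finset.univ,
        incrGain lam (x a) (x ∘ g) ≤ incrGain lam (x (pick lam x g)) (x ∘ g) := by
  have hs := (Finset.exists_max_image (Finset.univ \ Finset.image g Finset.univ)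
    (fun a => incrGain lam (x a) (x ∘ g)) h).choose_spec
  rw [pick, dif_pos h]
  exact hs

noncomputable def Pfun {T : ℕ} [NeZero T] (lam : ℝ) (x : Fin T → H) : (n : ℕ) → (Fin n → Fin T)
  | 0 => Fin.elim0
  | n+1 => Fin.snoc (Pfun lam x n) (pick lam x (Pfun lam x n))

lemma Pfun_inj {T : ℕ} [NeZero T] (lam : ℝ) (x : Fin T → H) :
    ∀ n, n ≤ T → Function.Injective (Pfun lam x n) := by
  intro n
  induction n with
  | zero => intro _ a; exact a.elim0
  | succ n IH =>
      intro hn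
      have hinj := IH (Nat.le_of_succ_le hn)
      have hne : (Finset.univ \ Finset.image (Pfun lam x n) Finset.univ).Nonempty := by
        rw [Finset.sdiff_nonempty]
        intro hsub
        have hc := Finset.card_le_card hsub
        rw [Finset.card_image_of_injective _ hinj, Finset.card_univ, Finset.card_univ,
          Fintype.card_fin, Fintype.card_fin] at hc
        omega
      have hnotin : pick lam x (Pfun lam x n) ∉ Finset.image (Pfun lam x n) Finset.univ :=
        (Finset.mem_sdiff.mp (pick_spec lam x _ hne).1).2
      intro a b hab
      induction a using Fin.lastCases with
      | last =>
          induction b using Fin.lastCases with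
          | last => rfl
          | cast b =>
              exfalso
              rw [show Pfun lam x (n+1) = Fin.snoc (Pfun lam x n) (pick lam x (Pfun lam x n))
                from rfl, Fin.snoc_last, Fin.snoc_castSucc] at hab
              exact hnotin (Finset.mem_image.mpr ⟨b, Finset.mem_univ b, hab.symm⟩)
      | cast a =>
          induction b using Fin.lastCases with
          | last =>
              exfalso
              rw [show Pfun lam x (n+1) = Fin.snoc (Pfun lam x n) (pick lam x (Pfun lam x n))
                from rfl, Fin.snoc_last, Fin.snoc_castSucc] at hab
              exact hnotin (Finset.mem_image.mpr ⟨a, Finset.mem_univ a, hab⟩)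
          | cast b =>
              rw [show Pfun lam x (n+1) = Fin.snoc (Pfun lam x n) (pick lam x (Pfun lam x n))
                from rfl, Fin.snoc_castSucc, Fin.snoc_castSucc] at hab
              rw [hinj hab]

lemma Pfun_compl_nonempty {T : ℕ} [NeZero T] (lam : ℝ) (x : Fin T → H) {n : ℕ} (hn : n < T) :
    (Finset.univ \ Finset.image (Pfun lam x n) Finset.univ).Nonempty := by
  rw [Finset.sdiff_nonempty]
  intro hsub
  have hc := Finset.card_le_card hsub
  rw [Finset.card_image_of_injective _ (Pfun_inj lam x n hn.le), Finset.card_univ,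
    Finset.card_univ, Fintype.card_fin, Fintype.card_fin] at hc
  omega

lemma Pfun_apply {T : ℕ} [NeZero T] (lam : ℝ) (x : Fin T → H) :
    ∀ (n : ℕ) (j : Fin n), Pfun lam x n j = pick lam x (Pfun lam x j.1) := by
  intro n
  induction n with
  | zero => intro j; exact j.elim0
  | succ n IH =>
      intro j
      induction j using Fin.lastCases with
      | last =>
          rw [show Pfun lam x (n+1) = Fin.snoc (Pfun lam x n) (pick lam x (Pfun lam x n))
            from rfl, Fin.snoc_last]
          rfl
      | cast j =>
          rw [show Pfun lam x (n+1) = Fin.snoc (Pfun lam x n) (pick lam x (Pfun lam x n))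
            from rfl, Fin.snoc_castSucc, IH j]
          rfl
end Greedy
end SubAux


/-- **Lemma 3 (submodularity).** Any `T` points can be rearranged (by a permutation `σ`)
so that the increments of information gain are monotonically non-increasing:
`Δγ(λ; x_i | x_1,…,x_{i−1}) ≥ Δγ(λ; x_{i+1} | x_1,…,x_i)` for `i = 1,…,T−1`. -/
theorem exists_perm_incrGain_antitone
    {H : Type*} [NormedAddCommGroup H] [InnerProductSpace ℝ H]
    (lam : ℝ) (hlam : 0 < lam) {T : ℕ} (x : Fin T → H) :
    ∃ σ : Equiv.Perm (Fin T), ∀ (i : ℕ) (h : i + 1 < T),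
      incrGain lam (x (σ ⟨i, Nat.lt_of_succ_lt h⟩))
          (fun j : Fin i => x (σ ⟨j.1, j.2.trans (Nat.lt_of_succ_lt h)⟩)) ≥
        incrGain lam (x (σ ⟨i + 1, h⟩))
          (fun j : Fin (i + 1) => x (σ ⟨j.1, j.2.trans h⟩)) := by
  classical
  rcases Nat.eq_zero_or_pos T with hT | hT
  · subst hT
    exact ⟨Equiv.refl _, fun i h => absurd h (by omega)⟩
  haveI : NeZero T := ⟨hT.ne'⟩
  set c : ℕ → Fin T := fun n => SubAux.pick lam x (SubAux.Pfun lam x n) with hc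
  have hbij : Function.Bijective (SubAux.Pfun lam x T) :=
    Finite.injective_iff_bijective.mp (SubAux.Pfun_inj lam x T le_rfl)
  refine ⟨Equiv.ofBijective _ hbij, fun i h => ?_⟩
  have hσ : ∀ (m : ℕ) (hm : m < T), Equiv.ofBijective _ hbij ⟨m, hm⟩ = c m := by
    intro m hm
    show SubAux.Pfun lam x T ⟨m, hm⟩ = c m
    rw [SubAux.Pfun_apply lam x T ⟨m, hm⟩]
  have hpre : ∀ (m : ℕ) (hm : m ≤ T) (f : Fin m → Fin T),
      (∀ j : Fin m, f j = (⟨j.1, lt_of_lt_of_le j.2 hm⟩ : Fin T)) →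
      (fun j : Fin m => x (Equiv.ofBijective _ hbij (f j))) = x ∘ SubAux.Pfun lam x m := by
    intro m hm f hf
    funext j
    have h1 : Equiv.ofBijective _ hbij (f j) = c j.1 := by
      rw [hf j]; exact hσ j.1 (lt_of_lt_of_le j.2 hm)
    rw [Function.comp_apply, h1, SubAux.Pfun_apply lam x m j]
  have hL : (fun j : Fin i => x ((Equiv.ofBijective _ hbij)
      ⟨j.1, j.2.trans (Nat.lt_of_succ_lt h)⟩)) = x ∘ SubAux.Pfun lam x i :=
    hpre i (by omega) _ (fun j => rfl)
  have hR : (fun j : Fin (i+1) => x ((Equiv.ofBijective _ hbij)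
      ⟨j.1, j.2.trans h⟩)) = x ∘ SubAux.Pfun lam x (i+1) :=
    hpre (i+1) (by omega) _ (fun j => rfl)
  rw [hσ i (Nat.lt_of_succ_lt h), hσ (i+1) h, hL, hR]
  -- now pure greedy chain
  have hsnoc : x ∘ SubAux.Pfun lam x (i+1) = Fin.snoc (x ∘ SubAux.Pfun lam x i) (x (c i)) := by
    rw [show SubAux.Pfun lam x (i+1)
      = Fin.snoc (SubAux.Pfun lam x i) (c i) from rfl, Fin.comp_snoc]
  have step2 : incrGain lam (x (c (i+1))) (x ∘ SubAux.Pfun lam x (i+1))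
      = incrGain lam (x (c (i+1))) (Fin.cons (x (c i)) (x ∘ SubAux.Pfun lam x i)) := by
    rw [hsnoc, SubAux.incrGain_snoc]
  have step3 : incrGain lam (x (c (i+1))) (Fin.cons (x (c i)) (x ∘ SubAux.Pfun lam x i))
      ≤ incrGain lam (x (c (i+1))) (x ∘ SubAux.Pfun lam x i) :=
    SubAux.incrGain_cons_le lam hlam _ _ _
  have hmem : c (i+1) ∈ Finset.univ \ Finset.image (SubAux.Pfun lam x i) Finset.univ := by
    have h1 := (Finset.mem_sdiff.mp
      (SubAux.pick_spec lam x _ (SubAux.Pfun_compl_nonempty lam x h)).1).2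
    rw [Finset.mem_sdiff]
    refine ⟨Finset.mem_univ _, fun hmem' => h1 ?_⟩
    obtain ⟨j, _, hj⟩ := Finset.mem_image.mp hmem'
    refine Finset.mem_image.mpr ⟨j.castSucc, Finset.mem_univ _, ?_⟩
    rw [show SubAux.Pfun lam x (i+1)
      = Fin.snoc (SubAux.Pfun lam x i) (c i) from rfl, Fin.snoc_castSucc, hj]
    rfl
  have step4 : incrGain lam (x (c (i+1))) (x ∘ SubAux.Pfun lam x i)
      ≤ incrGain lam (x (c i)) (x ∘ SubAux.Pfun lam x i) := by
    have hne : (Finset.univ \ Finset.image (SubAux.Pfun lam x i) Finset.univ).Nonempty :=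
      SubAux.Pfun_compl_nonempty lam x (by omega)
    exact (SubAux.pick_spec lam x _ hne).2 _ hmem
  rw [ge_iff_le, step2]
  exact le_trans step3 step4
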